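/- Let A_1, …, A_n be d×d real positive semidefinite matrices. Then ‖Σ_{i=1}^n A_i²‖ ≤ (max_{1≤i≤n} ‖A_i‖) · ‖Σ_{i=1}^n A_i‖, where ‖·‖ is the spectral norm. -/

import Mathlib

open Matrix ContinuousLinearMap

section CLM

variable {E : Type*} [NormedAddCommGroup E] [InnerProductSpace ℝ E] [CompleteSpace E]

open scoped InnerProductSpace

/-- Cauchy–Schwarz for the positive bilinear form induced by a positive operator. -/
lemma isPositive_cs {T : E →L[ℝ] E} (hT : T.IsPositive) (x y : E) :
    ⟪T x, y⟫_ℝ ^ 2 ≤ ⟪T x, x⟫_ℝ * ⟪T y, y⟫_ℝ := by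
  have hsymm := ContinuousLinearMap.isSelfAdjoint_iff_isSymmetric.mp hT.isSelfAdjoint
  have h : ∀ t : ℝ, 0 ≤ ⟪T y, y⟫_ℝ * (t * t) + (2 * ⟪T x, y⟫_ℝ) * t + ⟪T x, x⟫_ℝ := by
    intro t
    have h0 := hT.inner_nonneg_left (x + t • y)
    have hyx : ⟪T y, x⟫_ℝ = ⟪T x, y⟫_ℝ := (hsymm y x).trans (real_inner_comm _ _)
    simp only [map_add, ContinuousLinearMap.map_smul, inner_add_left, inner_add_right,
      inner_smul_left, inner_smul_right, RCLike.re_to_real, conj_trivial] at h0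
    rw [hyx] at h0
    nlinarith [h0]
  have hd := discrim_le_zero h
  rw [discrim] at hd
  nlinarith [hd]

lemma isPositive_norm_apply_sq_le {T : E →L[ℝ] E} (hT : T.IsPositive) (x : E) :
    ‖T x‖ ^ 2 ≤ ‖T‖ * ⟪T x, x⟫_ℝ := by
  have hcs := isPositive_cs hT x (T x)
  have h1 : ⟪T x, T x⟫_ℝ = ‖T x‖ ^ 2 := real_inner_self_eq_norm_sq _
  have h2 : ⟪T (T x), T x⟫_ℝ ≤ ‖T‖ * ‖T x‖ ^ 2 := by
    calc ⟪T (T x), T x⟫_ℝ ≤ ‖T (T x)‖ * ‖T x‖ := real_inner_le_norm _ _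
      _ ≤ (‖T‖ * ‖T x‖) * ‖T x‖ := by gcongr; exact T.le_opNorm _
      _ = ‖T‖ * ‖T x‖ ^ 2 := by ring
  have hxx := hT.inner_nonneg_left x
  change 0 ≤ ⟪T x, x⟫_ℝ at hxx
  rcases eq_or_lt_of_le (norm_nonneg (T x)) with h | h
  · rw [← h]; simpa using mul_nonneg (norm_nonneg T) hxx
  · nlinarith [hcs, h1, h2, hxx, mul_le_mul_of_nonneg_left h2 hxx, sq_nonneg ‖T x‖,
      mul_pos h h]

/-- If `0 ≤ S ≤ R` (in the sense of quadratic forms), then `‖S‖ ≤ ‖R‖`. -/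
lemma isPositive_norm_le_norm {S R : E →L[ℝ] E} (hS : S.IsPositive) (hR : R.IsPositive)
    (h : ∀ x, ⟪S x, x⟫_ℝ ≤ ⟪R x, x⟫_ℝ) : ‖S‖ ≤ ‖R‖ := by
  have key : ∀ x, ‖S x‖ ^ 2 ≤ ‖R‖ * ‖S‖ * ‖x‖ ^ 2 := by
    intro x
    have hSn : (0:ℝ) ≤ ‖S‖ := norm_nonneg _
    calc ‖S x‖ ^ 2 ≤ ‖S‖ * ⟪S x, x⟫_ℝ := isPositive_norm_apply_sq_le hS x
      _ ≤ ‖S‖ * ⟪R x, x⟫_ℝ := mul_le_mul_of_nonneg_left (h x) hSn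
      _ ≤ ‖S‖ * (‖R‖ * ‖x‖ ^ 2) := by
          refine mul_le_mul_of_nonneg_left ?_ hSn
          have h1 : ⟪R x, x⟫_ℝ ≤ ‖R x‖ * ‖x‖ := real_inner_le_norm _ _
          have h2 : ‖R x‖ ≤ ‖R‖ * ‖x‖ := R.le_opNorm _
          nlinarith [norm_nonneg x, norm_nonneg (R x)]
      _ = ‖R‖ * ‖S‖ * ‖x‖ ^ 2 := by ring
  have hSle : ‖S‖ ≤ Real.sqrt (‖R‖ * ‖S‖) := by
    refine S.opNorm_le_bound (Real.sqrt_nonneg _) fun x => ?_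
    have hx := key x
    have hle : ‖S x‖ ≤ Real.sqrt (‖R‖ * ‖S‖ * ‖x‖ ^ 2) := by
      rw [← Real.sqrt_sq (norm_nonneg (S x))]
      exact Real.sqrt_le_sqrt hx
    rwa [Real.sqrt_mul (by positivity), Real.sqrt_sq (norm_nonneg x)] at hle
  rcases eq_or_lt_of_le (norm_nonneg S) with h0 | h0
  · rw [← h0]; exact norm_nonneg _
  · have hsq : ‖S‖ ^ 2 ≤ ‖R‖ * ‖S‖ := by
      have := Real.sq_sqrt (by positivity : (0:ℝ) ≤ ‖R‖ * ‖S‖)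
      nlinarith [hSle, Real.sqrt_nonneg (‖R‖ * ‖S‖)]
    nlinarith


lemma isPositive_sq {T : E →L[ℝ] E} (hT : T.IsPositive) : (T ^ 2).IsPositive := by
  have hsymm := ContinuousLinearMap.isSelfAdjoint_iff_isSymmetric.mp hT.isSelfAdjoint
  constructor
  · exact ContinuousLinearMap.isSelfAdjoint_iff_isSymmetric.mp (hT.isSelfAdjoint.pow 2)
  · intro x
    simp only [ContinuousLinearMap.reApplyInnerSelf, RCLike.re_to_real, pow_two,
      ContinuousLinearMap.mul_apply]
    exact le_of_le_of_eq real_inner_self_nonneg (hsymm (T x) x).symm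

lemma sq_inner_le {T : E →L[ℝ] E} (hT : T.IsPositive) {M : ℝ} (hM : ‖T‖ ≤ M) (x : E) :
    ⟪(T ^ 2) x, x⟫_ℝ ≤ M * ⟪T x, x⟫_ℝ := by
  have hsymm := ContinuousLinearMap.isSelfAdjoint_iff_isSymmetric.mp hT.isSelfAdjoint
  have h1 : ⟪(T ^ 2) x, x⟫_ℝ = ‖T x‖ ^ 2 := by
    rw [pow_two, ContinuousLinearMap.mul_apply]
    exact (hsymm (T x) x).trans (real_inner_self_eq_norm_sq _)
  have h2 := isPositive_norm_apply_sq_le hT x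
  have hxx := hT.inner_nonneg_left x
  change 0 ≤ ⟪T x, x⟫_ℝ at hxx
  nlinarith [mul_le_mul_of_nonneg_right hM hxx]

lemma isPositive_sum {ι : Type*} (s : Finset ι) (f : ι → E →L[ℝ] E)
    (hf : ∀ i ∈ s, (f i).IsPositive) : (∑ i ∈ s, f i).IsPositive :=
  Finset.sum_induction f _ (fun _ _ ha hb => ha.add hb) ContinuousLinearMap.isPositive_zero hf

lemma isPositive_smul {c : ℝ} (hc : 0 ≤ c) {T : E →L[ℝ] E} (hT : T.IsPositive) :
    (c • T).IsPositive := by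
  constructor
  · refine ContinuousLinearMap.isSelfAdjoint_iff_isSymmetric.mp ?_
    simp [_root_.IsSelfAdjoint, star_smul, hT.isSelfAdjoint.star_eq]
  · intro x
    have := hT.inner_nonneg_left x
    change 0 ≤ ⟪T x, x⟫_ℝ at this
    simp only [ContinuousLinearMap.reApplyInnerSelf, ContinuousLinearMap.smul_apply,
      real_inner_smul_left, RCLike.re_to_real]
    exact mul_nonneg hc this

end CLM

open scoped InnerProductSpace

/-- PSD matrix gives a positive operator. -/
lemma posSemidef_toEuclideanCLM {d : ℕ} {A : Matrix (Fin d) (Fin d) ℝ} (hA : A.PosSemidef) :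
    (Matrix.toEuclideanCLM (𝕜 := ℝ) A :
      EuclideanSpace ℝ (Fin d) →L[ℝ] EuclideanSpace ℝ (Fin d)).IsPositive := by
  constructor
  · refine ContinuousLinearMap.isSelfAdjoint_iff_isSymmetric.mp ?_
    rw [_root_.IsSelfAdjoint, ← map_star]
    congr 1
    rw [Matrix.star_eq_conjTranspose, hA.1]
  · intro x
    simp only [ContinuousLinearMap.reApplyInnerSelf, RCLike.re_to_real]
    have hx := congrFun (Matrix.ofLp_toEuclideanCLM (𝕜 := ℝ) A x)
    have h2 := hA.dotProduct_mulVec_nonneg ((WithLp.equiv 2 _) x)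
    rw [real_inner_comm]
    calc (0:ℝ) ≤ star ((WithLp.equiv 2 _) x) ⬝ᵥ (A *ᵥ ((WithLp.equiv 2 _) x)) := h2
      _ = ⟪x, (Matrix.toEuclideanCLM (𝕜 := ℝ) A) x⟫_ℝ := by
          simp [dotProduct, PiLp.inner_apply, hx, mul_comm]

/-- The spectral norm (largest singular value / `ℓ²` operator norm) of a real square matrix. -/
noncomputable def specNorm {d : ℕ} (A : Matrix (Fin d) (Fin d) ℝ) : ℝ :=
  ‖(Matrix.toEuclideanCLM (𝕜 := ℝ) A : EuclideanSpace ℝ (Fin d) →L[ℝ] EuclideanSpace ℝ (Fin d))‖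

/-- for positive semidefinite matrices `A₁,…,Aₙ`,
`‖Σ Aᵢ²‖ ≤ (max_i ‖Aᵢ‖) ⬝ ‖Σ Aᵢ‖` in spectral norm. -/
theorem stmt8 {d n : ℕ} (hn : 0 < n) (A : Fin n → Matrix (Fin d) (Fin d) ℝ)
    (hA : ∀ i, (A i).PosSemidef) :
    specNorm (∑ i, (A i) ^ 2) ≤ (⨆ i, specNorm (A i)) * specNorm (∑ i, A i) := by
  haveI : Nonempty (Fin n) := Fin.pos_iff_nonempty.mp hn
  set T : Fin n → (EuclideanSpace ℝ (Fin d) →L[ℝ] EuclideanSpace ℝ (Fin d)) :=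
    fun i => Matrix.toEuclideanCLM (𝕜 := ℝ) (A i) with hTdef
  have hT : ∀ i, (T i).IsPositive := fun i => posSemidef_toEuclideanCLM (hA i)
  set M : ℝ := ⨆ i, specNorm (A i) with hMdef
  have hMi : ∀ i, ‖T i‖ ≤ M := fun i =>
    le_ciSup (f := fun i => specNorm (A i)) (Set.Finite.bddAbove (Set.finite_range _)) i
  have hM0 : (0:ℝ) ≤ M := le_trans (norm_nonneg (T (Classical.arbitrary _))) (hMi _)
  have hS : (∑ i, (T i) ^ 2).IsPositive :=
    isPositive_sum _ _ fun i _ => isPositive_sq (hT i)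
  have hSum : (∑ i, T i).IsPositive := isPositive_sum _ _ fun i _ => hT i
  have hR : (M • ∑ i, T i).IsPositive := isPositive_smul hM0 hSum
  have hle : ∀ x, ⟪(∑ i, (T i) ^ 2) x, x⟫_ℝ ≤ ⟪(M • ∑ i, T i) x, x⟫_ℝ := by
    intro x
    simp only [ContinuousLinearMap.sum_apply, sum_inner, ContinuousLinearMap.smul_apply,
      real_inner_smul_left, Finset.mul_sum]
    exact Finset.sum_le_sum fun i _ => sq_inner_le (hT i) (hMi i) x
  have hnorm := isPositive_norm_le_norm hS hR hle
  have e1 : specNorm (∑ i, (A i) ^ 2) = ‖∑ i, (T i) ^ 2‖ := by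
    rw [specNorm, map_sum]
    simp only [map_pow, hTdef]
  have e2 : specNorm (∑ i, A i) = ‖∑ i, T i‖ := by
    rw [specNorm, map_sum]
  rw [e1, e2]
  calc ‖∑ i, (T i) ^ 2‖ ≤ ‖M • ∑ i, T i‖ := hnorm
    _ ≤ M * ‖∑ i, T i‖ := by
        have h3 : ‖M • ∑ i, T i‖ ≤ ‖M‖ * ‖∑ i, T i‖ :=
          ContinuousLinearMap.opNorm_smul_le M (∑ i, T i)
        rwa [Real.norm_of_nonneg hM0] at h3
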